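/- Let φ : X → Y be a code between shift spaces and suppose Y is a shift of finite type. If φ is bi-continuing with a bi-retract, then φ is open and has a uniform lifting length. -/

import Mathlib

open Set Filter

/-- The product topology on `ℤ → A`, where the alphabet `A` carries the
discrete topology. -/
def seqTop (A : Type*) : TopologicalSpace (ℤ → A) :=
  @Pi.topologicalSpace ℤ (fun _ => A) (fun _ => ⊥)

/-- The shift map `σ`, defined by `σ(x)_i = x_{i+1}`. -/
def shiftMap {A : Type*} (x : ℤ → A) : ℤ → A := fun i => x (i + 1)

/-- A shift space: a nonempty, closed, shift-invariant subset of `A^ℤ`. -/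
def IsShiftSpace {A : Type*} (X : Set (ℤ → A)) : Prop :=
  X.Nonempty ∧ @IsClosed _ (seqTop A) X ∧ shiftMap '' X = X

/-- The word `u` occurs in `x` at coordinate `i`. -/
def OccursAt {A : Type*} (x : ℤ → A) (u : List A) (i : ℤ) : Prop :=
  ∀ k : Fin u.length, x (i + ((k : ℕ) : ℤ)) = u.get k

/-- `u` is a word of the language `B(X)` of `X`. -/
def IsWordOf {A : Type*} (X : Set (ℤ → A)) (u : List A) : Prop :=
  ∃ x ∈ X, OccursAt x u 0

/-- A shift of finite type: a shift space defined by finitely many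
forbidden words. -/
def IsSFT {A : Type*} (X : Set (ℤ → A)) : Prop :=
  IsShiftSpace X ∧ ∃ F : Finset (List A),
    X = { x | ∀ u ∈ F, ∀ i : ℤ, ¬ OccursAt x u i }

/-- A code: a continuous shift-commuting map from `X` to `Y`. -/
def IsCode {A B : Type*} (X : Set (ℤ → A)) (Y : Set (ℤ → B))
    (φ : (ℤ → A) → (ℤ → B)) : Prop :=
  Set.MapsTo φ X Y ∧ @ContinuousOn _ _ (seqTop A) (seqTop B) φ X ∧
    ∀ x ∈ X, φ (shiftMap x) = shiftMap (φ x)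

/-- A factor code: a surjective code. -/
def IsFactorCode {A B : Type*} (X : Set (ℤ → A)) (Y : Set (ℤ → B))
    (φ : (ℤ → A) → (ℤ → B)) : Prop :=
  IsCode X Y φ ∧ Y ⊆ φ '' X

/-- A code is open if it maps (relatively) open subsets of `X` to
(relatively) open subsets of `Y`. -/
def IsOpenCode {A B : Type*} (X : Set (ℤ → A)) (Y : Set (ℤ → B))
    (φ : (ℤ → A) → (ℤ → B)) : Prop :=
  ∀ U : Set (ℤ → A), @IsOpen _ (seqTop A) U →
    ∃ V : Set (ℤ → B), @IsOpen _ (seqTop B) V ∧ φ '' (X ∩ U) = Y ∩ V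

/-- A code has a uniform lifting length `l`. -/
def HasUniformLiftingLength {A B : Type*} (X : Set (ℤ → A)) (Y : Set (ℤ → B))
    (φ : (ℤ → A) → (ℤ → B)) : Prop :=
  ∃ l : ℕ, ∀ k : ℕ, ∀ x ∈ X, ∀ y ∈ Y,
    (∀ i : ℤ, |i| ≤ (k : ℤ) + (l : ℤ) → φ x i = y i) →
    ∃ x' ∈ X, (∀ i : ℤ, |i| ≤ (k : ℤ) → x' i = x i) ∧ φ x' = y

/-- Right continuing code. -/
def IsRightContinuing {A B : Type*} (X : Set (ℤ → A)) (Y : Set (ℤ → B))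
    (φ : (ℤ → A) → (ℤ → B)) : Prop :=
  ∀ x ∈ X, ∀ y ∈ Y, (∃ M : ℤ, ∀ i ≤ M, φ x i = y i) →
    ∃ x' ∈ X, (∃ M : ℤ, ∀ i ≤ M, x' i = x i) ∧ φ x' = y

/-- Left continuing code. -/
def IsLeftContinuing {A B : Type*} (X : Set (ℤ → A)) (Y : Set (ℤ → B))
    (φ : (ℤ → A) → (ℤ → B)) : Prop :=
  ∀ x ∈ X, ∀ y ∈ Y, (∃ M : ℤ, ∀ i, M ≤ i → φ x i = y i) →
    ∃ x' ∈ X, (∃ M : ℤ, ∀ i, M ≤ i → x' i = x i) ∧ φ x' = y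

/-- `n` is a right continuing retract of `φ`. -/
def IsRightRetract {A B : Type*} (X : Set (ℤ → A)) (Y : Set (ℤ → B))
    (φ : (ℤ → A) → (ℤ → B)) (n : ℕ) : Prop :=
  ∀ x ∈ X, ∀ y ∈ Y, (∀ i : ℤ, i ≤ 0 → φ x i = y i) →
    ∃ x' ∈ X, φ x' = y ∧ ∀ i : ℤ, i ≤ -(n : ℤ) → x' i = x i

/-- `n` is a left continuing retract of `φ`. -/
def IsLeftRetract {A B : Type*} (X : Set (ℤ → A)) (Y : Set (ℤ → B))
    (φ : (ℤ → A) → (ℤ → B)) (n : ℕ) : Prop :=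
  ∀ x ∈ X, ∀ y ∈ Y, (∀ i : ℤ, 0 ≤ i → φ x i = y i) →
    ∃ x' ∈ X, φ x' = y ∧ ∀ i : ℤ, (n : ℤ) ≤ i → x' i = x i

/-- Right closing code. -/
def IsRightClosing {A B : Type*} (X : Set (ℤ → A))
    (φ : (ℤ → A) → (ℤ → B)) : Prop :=
  ∀ x ∈ X, ∀ x' ∈ X, (∃ M : ℤ, ∀ i ≤ M, x i = x' i) → φ x = φ x' → x = x'

/-- Left closing code. -/
def IsLeftClosing {A B : Type*} (X : Set (ℤ → A))
    (φ : (ℤ → A) → (ℤ → B)) : Prop :=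
  ∀ x ∈ X, ∀ x' ∈ X, (∃ M : ℤ, ∀ i, M ≤ i → x i = x' i) → φ x = φ x' → x = x'

/-- A sofic shift: a factor of a shift of finite type. -/
def IsSofic {B : Type*} (Y : Set (ℤ → B)) : Prop :=
  ∃ (C : Type) (_ : Fintype C) (Z : Set (ℤ → C)) (π : (ℤ → C) → (ℤ → B)),
    IsSFT Z ∧ IsFactorCode Z Y π

/-- Irreducibility of a shift space. -/
def IsIrreducibleShift {A : Type*} (X : Set (ℤ → A)) : Prop :=
  ∀ u v : List A, IsWordOf X u → IsWordOf X v →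
    ∃ w : List A, IsWordOf X (u ++ w ++ v)

/-- Mixing shift space. -/
def IsMixingShift {A : Type*} (X : Set (ℤ → A)) : Prop :=
  ∀ u v : List A, IsWordOf X u → IsWordOf X v →
    ∃ N : ℕ, ∀ n : ℕ, N ≤ n →
      ∃ w : List A, w.length = n ∧ IsWordOf X (u ++ w ++ v)

/-- The almost specification property. -/
def AlmostSpecified {A : Type*} (X : Set (ℤ → A)) : Prop :=
  ∃ N : ℕ, ∀ u v : List A, IsWordOf X u → IsWordOf X v →
    ∃ w : List A, w.length ≤ N ∧ IsWordOf X (u ++ w ++ v)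

/-- The specification property. -/
def HasSpecification {A : Type*} (X : Set (ℤ → A)) : Prop :=
  ∃ N : ℕ, ∀ u v : List A, IsWordOf X u → IsWordOf X v →
    ∃ w : List A, w.length = N ∧ IsWordOf X (u ++ w ++ v)

/-- A synchronizing word of `X`. -/
def IsSynchronizingWord {A : Type*} (X : Set (ℤ → A)) (v : List A) : Prop :=
  IsWordOf X v ∧ ∀ u w : List A, IsWordOf X (u ++ v) → IsWordOf X (v ++ w) →
    IsWordOf X (u ++ v ++ w)

/-- A synchronized system: an irreducible shift space with a synchronizing
word. -/
def IsSynchronizedSystem {A : Type*} (X : Set (ℤ → A)) : Prop :=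
  IsIrreducibleShift X ∧ ∃ v : List A, IsSynchronizingWord X v

/-- A subshift of `X`. -/
def IsSubshiftOf {A : Type*} (X' X : Set (ℤ → A)) : Prop :=
  IsShiftSpace X' ∧ X' ⊆ X

/-- The number of words of length `n` in the language of `X`. -/
noncomputable def wordCount {A : Type*} (X : Set (ℤ → A)) (n : ℕ) : ℕ :=
  Set.ncard { u : List A | u.length = n ∧ IsWordOf X u }

/-- The entropy `h(X) = lim (1/n) log |B_n(X)|` of a shift space (the limit
exists by subadditivity, hence equals the limsup used here). -/
noncomputable def entropy {A : Type*} (X : Set (ℤ → A)) : ℝ :=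
  Filter.limsup (fun n : ℕ => Real.log (wordCount X n) / (n : ℝ)) Filter.atTop

/-- The periodic condition `P(X) ↘ P(Y)`. -/
def PeriodicCondition {A B : Type*} (X : Set (ℤ → A)) (Y : Set (ℤ → B)) : Prop :=
  ∀ n : ℕ, 0 < n → (∃ x ∈ X, shiftMap^[n] x = x) → ∃ y ∈ Y, shiftMap^[n] y = y

/-- A cyclic cover `D_0, …, D_{p-1}` of a shift space `X`. -/
def IsCyclicCover {A : Type*} (X : Set (ℤ → A)) (p : ℕ)
    (D : ZMod p → Set (ℤ → A)) : Prop :=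
  0 < p ∧
  (∀ i, @IsClosed _ (seqTop A) (D i) ∧ D i ⊆ X) ∧
  (⋃ i, D i) = X ∧
  (∀ i, shiftMap '' D i = D (i + 1)) ∧
  (∀ i, ∀ U V : Set (ℤ → A), @IsOpen _ (seqTop A) U → @IsOpen _ (seqTop A) V →
    (D i ∩ U).Nonempty → (D i ∩ V).Nonempty →
    ∃ N : ℕ, ∀ n : ℕ, N ≤ n →
      ((shiftMap^[p * n] '' (D i ∩ U)) ∩ (D i ∩ V)).Nonempty) ∧
  (∀ i j, i ≠ j → ∀ U : Set (ℤ → A), @IsOpen _ (seqTop A) U →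
    X ∩ U ⊆ D i ∩ D j → X ∩ U = ∅)

/-- A left ray of `X`, recorded as `z : ℕ → A` where `z n` is the symbol at
coordinate `-(n+1)`. -/
def IsLeftRay {A : Type*} (X : Set (ℤ → A)) (z : ℕ → A) : Prop :=
  ∃ x ∈ X, ∀ n : ℕ, x (-((n : ℤ) + 1)) = z n

/-- Append the finite word `w` on the right of a left-infinite sequence `z`
(the last symbol of `w` ends up at coordinate `-1`). -/
def rayAppend {A : Type*} (z : ℕ → A) (w : List A) : ℕ → A :=
  fun n => if h : n < w.length then w.reverse.get ⟨n, by simpa using h⟩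
           else z (n - w.length)

/-- A left transitive point: every word of `X` occurs in `x_{(-∞,0]}`. -/
def IsLeftTransitive {A : Type*} (X : Set (ℤ → A)) (x : ℤ → A) : Prop :=
  ∀ u : List A, IsWordOf X u → ∃ i : ℤ, i + (u.length : ℤ) ≤ 1 ∧ OccursAt x u i

/-- A right transitive point: every word of `X` occurs in `x_{[0,∞)}`. -/
def IsRightTransitive {A : Type*} (X : Set (ℤ → A)) (x : ℤ → A) : Prop :=
  ∀ u : List A, IsWordOf X u → ∃ i : ℤ, 0 ≤ i ∧ OccursAt x u i

/-- Right continuing almost everywhere. -/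
def IsRightContinuingAE {A B : Type*} (X : Set (ℤ → A)) (Y : Set (ℤ → B))
    (φ : (ℤ → A) → (ℤ → B)) : Prop :=
  ∀ x ∈ X, IsLeftTransitive X x → ∀ y ∈ Y, (∃ M : ℤ, ∀ i ≤ M, φ x i = y i) →
    ∃ x' ∈ X, (∃ M : ℤ, ∀ i ≤ M, x' i = x i) ∧ φ x' = y

/-- Left continuing almost everywhere. -/
def IsLeftContinuingAE {A B : Type*} (X : Set (ℤ → A)) (Y : Set (ℤ → B))
    (φ : (ℤ → A) → (ℤ → B)) : Prop :=
  ∀ x ∈ X, IsRightTransitive X x → ∀ y ∈ Y, (∃ M : ℤ, ∀ i, M ≤ i → φ x i = y i) →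
    ∃ x' ∈ X, (∃ M : ℤ, ∀ i, M ≤ i → x' i = x i) ∧ φ x' = y

/-- The bi-infinite concatenations of blocks `1 0^s`, `s ∈ S`: the positions of
`1`s in `x` form the range of a strictly monotone `t : ℤ → ℤ` whose
consecutive gaps `t (n+1) - t n` all equal `s + 1` for some `s ∈ S`. -/
def GapConcat (S : Set ℕ) : Set (ℤ → Bool) :=
  { x | ∃ t : ℤ → ℤ, StrictMono t ∧ (∀ n : ℤ, ∃ s ∈ S, t (n + 1) = t n + (s : ℤ) + 1) ∧
      (∀ i : ℤ, x i = true ↔ ∃ n : ℤ, t n = i) }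

/-- The `S`-gap shift: the smallest shift space over `{0,1}` containing all
bi-infinite concatenations of blocks from `{1 0^s : s ∈ S}`. -/
def SGapShift (S : Set ℕ) : Set (ℤ → Bool) :=
  ⋂₀ { X : Set (ℤ → Bool) | IsShiftSpace X ∧ GapConcat S ⊆ X }

namespace BBIaux

variable {A B : Type*}

/-- Shift by `c`. -/
def shiftBy (c : ℤ) (x : ℤ → A) : ℤ → A := fun i => x (i + c)

lemma shiftMap_injective : Function.Injective (shiftMap (A := A)) := by
  intro a b h
  funext j
  have := congrFun h (j - 1)
  simpa [shiftMap] using this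

lemma shiftMap_shiftBy (c : ℤ) (x : ℤ → A) :
    shiftMap (shiftBy c x) = shiftBy (c + 1) x := by
  funext i
  simp only [shiftMap, shiftBy]
  ring_nf

lemma shiftBy_zero (x : ℤ → A) : shiftBy 0 x = x := by
  funext i; simp [shiftBy]

lemma shiftBy_shiftBy (c d : ℤ) (x : ℤ → A) :
    shiftBy c (shiftBy d x) = shiftBy (d + c) x := by
  funext i; simp only [shiftBy]; congr 1; ring

lemma shiftBy_mem {X : Set (ℤ → A)} (hX : shiftMap '' X = X) :
    ∀ c : ℤ, ∀ x ∈ X, shiftBy c x ∈ X := by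
  intro c
  induction c using Int.induction_on with
  | zero => intro x hx; rwa [shiftBy_zero]
  | succ c ih =>
      intro x hx
      have h2 : shiftMap (shiftBy c x) ∈ X := by
        rw [← hX]; exact ⟨_, ih x hx, rfl⟩
      rwa [shiftMap_shiftBy] at h2
  | pred c ih =>
      intro x hx
      have hco : (-(c : ℤ) - 1) = -((c : ℤ) + 1) := by ring
      rw [hco]
      have h1 : shiftBy (-c) x ∈ X := ih x hx
      rw [← hX] at h1
      obtain ⟨w, hw, hweq⟩ := h1
      have hkey : w = shiftBy (-(c + 1)) x := by
        apply shiftMap_injective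
        rw [hweq, shiftMap_shiftBy]
        congr 1
        ring
      rwa [hkey] at hw

lemma code_shiftBy {X : Set (ℤ → A)} {φ : (ℤ → A) → (ℤ → B)}
    (hX : shiftMap '' X = X)
    (hφc : ∀ x ∈ X, φ (shiftMap x) = shiftMap (φ x)) :
    ∀ c : ℤ, ∀ x ∈ X, φ (shiftBy c x) = shiftBy c (φ x) := by
  intro c
  induction c using Int.induction_on with
  | zero => intro x hx; rw [shiftBy_zero, shiftBy_zero]
  | succ c ih =>
      intro x hx
      have hmem : shiftBy c x ∈ X := shiftBy_mem hX c x hx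
      calc φ (shiftBy (c + 1) x) = φ (shiftMap (shiftBy c x)) := by
            rw [shiftMap_shiftBy]
        _ = shiftMap (φ (shiftBy c x)) := hφc _ hmem
        _ = shiftMap (shiftBy c (φ x)) := by rw [ih x hx]
        _ = shiftBy (c + 1) (φ x) := shiftMap_shiftBy _ _
  | pred c ih =>
      intro x hx
      have hco : (-(c : ℤ) - 1) = -((c : ℤ) + 1) := by ring
      rw [hco]
      have hmem : shiftBy (-(c + 1)) x ∈ X := shiftBy_mem hX _ x hx
      apply shiftMap_injective
      have h1 : shiftMap (shiftBy (-(c+1)) x) = shiftBy (-c) x := by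
        rw [shiftMap_shiftBy]; congr 1; ring
      have h2 : shiftMap (shiftBy (-(c+1)) (φ x)) = shiftBy (-c) (φ x) := by
        rw [shiftMap_shiftBy]; congr 1; ring
      rw [← hφc _ hmem, h1, h2, ih x hx]

lemma right_retract_shift {X : Set (ℤ → A)} {Y : Set (ℤ → B)}
    {φ : (ℤ → A) → (ℤ → B)} {n : ℕ}
    (hX : shiftMap '' X = X) (hY : shiftMap '' Y = Y)
    (hφc : ∀ x ∈ X, φ (shiftMap x) = shiftMap (φ x))
    (hr : IsRightRetract X Y φ n) (c : ℤ) :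
    ∀ x ∈ X, ∀ y ∈ Y, (∀ i ≤ c, φ x i = y i) →
      ∃ x' ∈ X, φ x' = y ∧ ∀ i ≤ c - n, x' i = x i := by
  intro x hx y hy hag
  have hx1 : shiftBy c x ∈ X := shiftBy_mem hX c x hx
  have hy1 : shiftBy c y ∈ Y := shiftBy_mem hY c y hy
  have hag1 : ∀ i : ℤ, i ≤ 0 → φ (shiftBy c x) i = shiftBy c y i := by
    intro i hi
    rw [code_shiftBy hX hφc c x hx]
    exact hag (i + c) (by omega)
  obtain ⟨z, hz, hφz, hzx⟩ := hr (shiftBy c x) hx1 (shiftBy c y) hy1 hag1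
  refine ⟨shiftBy (-c) z, shiftBy_mem hX _ z hz, ?_, ?_⟩
  · rw [code_shiftBy hX hφc _ z hz, hφz, shiftBy_shiftBy]
    simp [shiftBy_zero]
  · intro i hi
    show z (i + -c) = x i
    have h := hzx (i + -c) (by omega)
    simp only [shiftBy] at h
    rw [h]
    congr 1
    ring

lemma left_retract_shift {X : Set (ℤ → A)} {Y : Set (ℤ → B)}
    {φ : (ℤ → A) → (ℤ → B)} {n : ℕ}
    (hX : shiftMap '' X = X) (hY : shiftMap '' Y = Y)
    (hφc : ∀ x ∈ X, φ (shiftMap x) = shiftMap (φ x))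
    (hl : IsLeftRetract X Y φ n) (c : ℤ) :
    ∀ x ∈ X, ∀ y ∈ Y, (∀ i : ℤ, c ≤ i → φ x i = y i) →
      ∃ x' ∈ X, φ x' = y ∧ ∀ i : ℤ, c + n ≤ i → x' i = x i := by
  intro x hx y hy hag
  have hx1 : shiftBy c x ∈ X := shiftBy_mem hX c x hx
  have hy1 : shiftBy c y ∈ Y := shiftBy_mem hY c y hy
  have hag1 : ∀ i : ℤ, 0 ≤ i → φ (shiftBy c x) i = shiftBy c y i := by
    intro i hi
    rw [code_shiftBy hX hφc c x hx]
    exact hag (i + c) (by omega)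
  obtain ⟨z, hz, hφz, hzx⟩ := hl (shiftBy c x) hx1 (shiftBy c y) hy1 hag1
  refine ⟨shiftBy (-c) z, shiftBy_mem hX _ z hz, ?_, ?_⟩
  · rw [code_shiftBy hX hφc _ z hz, hφz, shiftBy_shiftBy]
    simp [shiftBy_zero]
  · intro i hi
    show z (i + -c) = x i
    have h := hzx (i + -c) (by omega)
    simp only [shiftBy] at h
    rw [h]
    congr 1
    ring

lemma splice_mem {Y : Set (ℤ → B)} {F : Finset (List B)}
    (hYF : Y = { y | ∀ u ∈ F, ∀ i : ℤ, ¬ OccursAt y u i }) {m : ℕ}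
    (hm : ∀ u ∈ F, u.length ≤ m)
    {y₁ y₂ : ℤ → B} (h1 : y₁ ∈ Y) (h2 : y₂ ∈ Y) (c : ℤ)
    (hag : ∀ i : ℤ, c - m < i → i ≤ c → y₁ i = y₂ i) :
    (fun i => if i ≤ c then y₁ i else y₂ i) ∈ Y := by
  rw [hYF] at h1 h2 ⊢
  intro u hu i hocc
  have hum : u.length ≤ m := hm u hu
  by_cases hc : i ≤ c - m
  · refine h1 u hu i ?_
    intro k
    have hk : ((k : ℕ) : ℤ) < (u.length : ℤ) := by exact_mod_cast k.isLt
    have hle : (u.length : ℤ) ≤ (m : ℤ) := by exact_mod_cast hum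
    have hj : i + ((k : ℕ) : ℤ) ≤ c := by omega
    have := hocc k
    simpa [hj] using this
  · refine h2 u hu i ?_
    intro k
    have := hocc k
    by_cases hj : i + ((k : ℕ) : ℤ) ≤ c
    · have hy : y₁ (i + ((k : ℕ) : ℤ)) = y₂ (i + ((k : ℕ) : ℤ)) := by
        refine hag _ (by omega) hj
      rw [← hy]
      simpa [hj] using this
    · simpa [hj] using this

lemma cyl_open (z : ℤ → B) (K : ℕ) :
    @IsOpen _ (seqTop B) { y : ℤ → B | ∀ i : ℤ, |i| ≤ (K : ℤ) → y i = z i } := by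
  letI : TopologicalSpace B := ⊥
  haveI : DiscreteTopology B := ⟨rfl⟩
  have heq : { y : ℤ → B | ∀ i : ℤ, |i| ≤ (K : ℤ) → y i = z i }
      = Set.pi { i : ℤ | |i| ≤ (K : ℤ) } (fun i => {z i}) := by
    ext y
    simp [Set.mem_pi]
  show IsOpen _
  rw [heq]
  refine isOpen_set_pi ?_ (fun a _ => isOpen_discrete _)
  exact (Set.finite_Icc (-(K : ℤ)) (K : ℤ)).subset (by
    intro i hi
    simp only [Set.mem_setOf_eq] at hi
    simp only [Set.mem_Icc]
    exact abs_le.mp hi)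

lemma exists_cyl_subset {U : Set (ℤ → A)} (hU : @IsOpen _ (seqTop A) U)
    {x : ℤ → A} (hx : x ∈ U) :
    ∃ k : ℕ, ∀ x' : ℤ → A, (∀ i : ℤ, |i| ≤ (k : ℤ) → x' i = x i) → x' ∈ U := by
  letI : TopologicalSpace A := ⊥
  obtain ⟨I, u, hIu, hsub⟩ := isOpen_pi_iff.mp hU x hx
  refine ⟨I.sup Int.natAbs, fun x' hx' => hsub ?_⟩
  intro i hi
  have h1 : i.natAbs ≤ I.sup Int.natAbs := Finset.le_sup hi
  have h2 : x' i = x i := by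
    refine hx' i ?_
    rw [Int.abs_eq_natAbs]
    exact_mod_cast h1
  rw [h2]
  exact (hIu i hi).2

end BBIaux

/-- If the codomain is a shift of finite type, then a
bi-continuing code with a bi-retract is open with a uniform lifting length. -/
theorem bicontinuing_biretract_implies_open_ull
    {A B : Type*} [Fintype A] [Fintype B]
    (X : Set (ℤ → A)) (Y : Set (ℤ → B)) (φ : (ℤ → A) → (ℤ → B))
    (hX : IsShiftSpace X) (hY : IsSFT Y) (hφ : IsCode X Y φ)
    (hrc : IsRightContinuing X Y φ) (hlc : IsLeftContinuing X Y φ)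
    (hret : ∃ n : ℕ, IsRightRetract X Y φ n ∧ IsLeftRetract X Y φ n) :
    IsOpenCode X Y φ ∧ HasUniformLiftingLength X Y φ := by
  classical
  obtain ⟨n, hrr, hlr⟩ := hret
  obtain ⟨hYss, F, hYF⟩ := hY
  set m : ℕ := F.sup List.length with hmdef
  have hmF : ∀ u ∈ F, u.length ≤ m := fun u hu => Finset.le_sup hu
  have hXinv := hX.2.2
  have hYinv := hYss.2.2
  have hφc := hφ.2.2
  have hφm := hφ.1
  -- Key uniform lifting statement with l = n + m
  have hull : ∀ k : ℕ, ∀ x ∈ X, ∀ y ∈ Y,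
      (∀ i : ℤ, |i| ≤ (k : ℤ) + ((n + m : ℕ) : ℤ) → φ x i = y i) →
      ∃ x' ∈ X, (∀ i : ℤ, |i| ≤ (k : ℤ) → x' i = x i) ∧ φ x' = y := by
    intro k x hx y hy hag
    set l : ℤ := (k : ℤ) + (n : ℤ) + (m : ℤ) with hldef
    have hagl : ∀ i : ℤ, |i| ≤ l → φ x i = y i := by
      intro i hi; apply hag; rw [abs_le] at hi ⊢; push_cast; omega
    set c : ℤ := -l + (m : ℤ) - 1 with hcdef
    set yp : ℤ → B := fun i => if i ≤ c then φ x i else y i with hypdef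
    have hypY : yp ∈ Y := by
      refine BBIaux.splice_mem hYF hmF (hφm hx) hy c ?_
      intro i h1 h2
      apply hagl
      rw [abs_le]
      omega
    -- yp agrees with φ x for i ≤ l
    have hyp1 : ∀ i : ℤ, i ≤ l → φ x i = yp i := by
      intro i hi
      by_cases hic : i ≤ c
      · simp [hypdef, hic]
      · have : |i| ≤ l := by rw [abs_le]; omega
        simp only [hypdef, if_neg hic]
        exact hagl i this
    obtain ⟨xp, hxp, hφxp, hxpx⟩ :=
      BBIaux.right_retract_shift hXinv hYinv hφc hrr l x hx yp hypY hyp1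
    -- φ xp = yp agrees with y for i ≥ -l
    have hyp2 : ∀ i : ℤ, -l ≤ i → φ xp i = y i := by
      intro i hi
      rw [hφxp]
      by_cases hic : i ≤ c
      · have : |i| ≤ l := by rw [abs_le]; omega
        simp only [hypdef, if_pos hic]
        exact hagl i this
      · simp [hypdef, hic]
    obtain ⟨x', hx', hφx', hx'xp⟩ :=
      BBIaux.left_retract_shift hXinv hYinv hφc hlr (-l) xp hxp y hy hyp2
    refine ⟨x', hx', ?_, hφx'⟩
    intro i hi
    rw [abs_le] at hi
    have h1 : x' i = xp i := hx'xp i (by omega)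
    have h2 : xp i = x i := hxpx i (by omega)
    rw [h1, h2]
  constructor
  · -- Openness
    intro U hU
    have hcyl : ∀ x : {x // x ∈ X ∩ U}, ∃ kk : ℕ,
        ∀ x' : ℤ → A, (∀ i : ℤ, |i| ≤ (kk : ℤ) → x' i = (x : ℤ → A) i) → x' ∈ U :=
      fun x => BBIaux.exists_cyl_subset hU x.2.2
    choose kf hkf using hcyl
    refine ⟨⋃ x : {x // x ∈ X ∩ U},
      { y : ℤ → B | ∀ i : ℤ, |i| ≤ ((kf x + (n + m) : ℕ) : ℤ) → y i = φ (x : ℤ → A) i },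
      ?_, ?_⟩
    · exact @isOpen_iUnion _ _ (seqTop B) _ (fun x => BBIaux.cyl_open _ _)
    · ext y
      constructor
      · rintro ⟨x, hx, rfl⟩
        refine ⟨hφm hx.1, ?_⟩
        exact Set.mem_iUnion.mpr ⟨⟨x, hx⟩, fun i _ => rfl⟩
      · rintro ⟨hyY, hyV⟩
        obtain ⟨x, hx⟩ := Set.mem_iUnion.mp hyV
        obtain ⟨x', hx'X, hx'x, hφx'⟩ :=
          hull (kf x) (x : ℤ → A) x.2.1 y hyY (by
            intro i hi
            refine (hx i ?_).symm
            rw [abs_le] at hi ⊢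
            push_cast at hi ⊢
            omega)
        exact ⟨x', ⟨hx'X, hkf x x' hx'x⟩, hφx'⟩
  · exact ⟨n + m, hull⟩
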